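/- Let d = 2r − 1 ≥ 5 be an odd integer and let f_d = (y³ − x²z)·x^{r−3}·y^{r−1} + x^d + y^d. Then the triple ρ_1 = (0, x^{r−1}y, (r+2)x^{r−3}y³ + (2r−1)y^r − (r−1)x^{r−1}z) is a Jacobian syzygy of f_d, i.e., 0·(f_d)_x + x^{r−1}y·(f_d)_y + ((r+2)x^{r−3}y³ + (2r−1)y^r − (r−1)x^{r−1}z)·(f_d)_z = 0; in particular mdr(f_d) ≤ r. -/

import Mathlib

open MvPolynomial

noncomputable section

/-- The polynomial ring `S = ℂ[x,y,z]`. -/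
abbrev S : Type := MvPolynomial (Fin 3) ℂ

/-- The linear map `(a,b,c) ↦ a fₓ + b f_y + c f_z`. -/
noncomputable def jacMap (f : S) : (Fin 3 → S) →ₗ[S] S :=
  Fintype.linearCombination S (fun i => pderiv i f)

/-- The module `AR(f)` of Jacobian syzygies of `f`. -/
def AR (f : S) : Submodule S (Fin 3 → S) := LinearMap.ker (jacMap f)

/-- The Jacobian ideal `J_f = (fₓ, f_y, f_z)`. -/
def jacobianIdeal (f : S) : Ideal S := Ideal.span (Set.range fun i : Fin 3 => pderiv i f)

/-- `dim_ℂ M(f)_k`, the dimension of the degree-`k` piece of the Milnor algebra `S/J_f`,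
computed as `dim (S_k / (J_f ∩ S_k))`. -/
noncomputable def milnorDim (f : S) (k : ℕ) : ℕ :=
  Module.finrank ℂ
    (↥(homogeneousSubmodule (Fin 3) ℂ k) ⧸
      (Submodule.comap (homogeneousSubmodule (Fin 3) ℂ k).subtype
        (Submodule.restrictScalars ℂ (jacobianIdeal f))))

/-- `mdr(f)`: the minimal degree of a nonzero homogeneous Jacobian syzygy. -/
noncomputable def mdr (f : S) : ℕ :=
  sInf {k | ∃ a : Fin 3 → S, a ∈ AR f ∧ a ≠ 0 ∧ ∀ i, (a i).IsHomogeneous k}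

/-- `g` is a homogeneous generating family of `AR(f)` with degrees `D`. -/
def HomGen (f : S) {m : ℕ} (g : Fin m → (Fin 3 → S)) (D : Fin m → ℕ) : Prop :=
  (∀ j, g j ∈ AR f) ∧ (∀ j i, ((g j) i).IsHomogeneous (D j)) ∧
    Submodule.span S (Set.range g) = AR f

/-- `C : f = 0` is an `m`-syzygy curve with exponents `D`. -/
def IsMSyzygy (f : S) (m : ℕ) (D : Fin m → ℕ) : Prop :=
  (∃ g, HomGen f g D) ∧
    ∀ (m' : ℕ) (g' : Fin m' → (Fin 3 → S)) (D' : Fin m' → ℕ), HomGen f g' D' → m ≤ m'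

/-- du Plessis–Wall bound `τ(d,r)_max` for `d/2 ≤ r ≤ d-1`. -/
def tauMax (d r : ℤ) : ℤ := (d-1)*(d-r-1) + r^2 - (2*r-d+2)*(2*r-d+1)/2

/-- `p` is a singular point of the curve `f = 0`. -/
def IsSingAt (f : S) (p : Fin 3 → ℂ) : Prop := ∀ i, eval p (pderiv i f) = 0

/-- `p` is an ordinary node: a singular point where the Hessian matrix has rank 2,
i.e. the quadratic part of a local affine equation is nondegenerate. -/
def IsNodeAt (f : S) (p : Fin 3 → ℂ) : Prop :=
  IsSingAt f p ∧ (Matrix.of fun i j : Fin 3 => eval p (pderiv i (pderiv j f))).rank = 2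

/-- The singular locus of `f = 0` as a set of points of `ℙ²`. -/
def SingLocus (f : S) : Set (Projectivization ℂ (Fin 3 → ℂ)) :=
  {P | IsSingAt f P.rep}

/-- The linear form with coefficient vector `v`. -/
def linForm (v : Fin 3 → ℂ) : S := ∑ i, C (v i) * X i

/-- `T(k)`: the coefficient of `t^k` in `((1-t^(d-1))/(1-t))³`, i.e. the Hilbert
function of the Milnor algebra of a smooth curve of degree `d`. -/
noncomputable def Tcoef (d k : ℕ) : ℚ :=
  PowerSeries.coeff (R := ℚ) k ((((1 : PowerSeries ℚ) - PowerSeries.X ^ (d-1)) * ((1 : PowerSeries ℚ) - PowerSeries.X)⁻¹) ^ 3)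


/-- `B(n) = n(n-1)/2`, the binomial coefficient "n choose 2" as a polynomial in `n ∈ ℤ`. -/
def binom2 (n : ℤ) : ℤ := n * (n - 1) / 2

/-- for odd `d = 2r-1 ≥ 5` and
`f_d = (y³-x²z)x^(r-3)y^(r-1)+x^d+y^d`, the triple
`ρ₁ = (0, x^(r-1)y, (r+2)x^(r-3)y³+(2r-1)y^r-(r-1)x^(r-1)z)` is a Jacobian syzygy of
`f_d`; in particular `mdr(f_d) ≤ r`. -/
theorem stmt10 (r d : ℕ) (hr : 3 ≤ r) (hd : d = 2 * r - 1) (f : S)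
    (hf : f = (X 1 ^ 3 - X 0 ^ 2 * X 2) * X 0 ^ (r - 3) * X 1 ^ (r - 1) +
        X 0 ^ d + X 1 ^ d) :
    0 * pderiv 0 f + (X 0 ^ (r - 1) * X 1) * pderiv 1 f +
        (C ((r : ℂ) + 2) * X 0 ^ (r - 3) * X 1 ^ 3 + C (2 * (r : ℂ) - 1) * X 1 ^ r -
          C ((r : ℂ) - 1) * X 0 ^ (r - 1) * X 2) * pderiv 2 f = 0 ∧
      mdr f ≤ r := by
  obtain ⟨u, rfl⟩ : ∃ u, r = u + 3 := ⟨r - 3, by omega⟩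
  subst hd
  rw [show u + 3 - 3 = u from by omega, show u + 3 - 1 = u + 2 from by omega,
    show 2 * (u + 3) - 1 = 2 * u + 5 from by omega] at hf
  rw [show u + 3 - 3 = u from by omega, show u + 3 - 1 = u + 2 from by omega]
  subst hf
  set b : S := X 0 ^ (u + 2) * X 1 with hb
  set c : S := C ((↑(u + 3) : ℂ) + 2) * X 0 ^ u * X 1 ^ 3 +
      C (2 * (↑(u + 3) : ℂ) - 1) * X 1 ^ (u + 3) -
      C ((↑(u + 3) : ℂ) - 1) * X 0 ^ (u + 2) * X 2 with hc
  set F : S := (X 1 ^ 3 - X 0 ^ 2 * X 2) * X 0 ^ u * X 1 ^ (u + 2) +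
      X 0 ^ (2 * u + 5) + X 1 ^ (2 * u + 5) with hF
  have key : 0 * pderiv 0 F + b * pderiv 1 F + c * pderiv 2 F = 0 := by
    have e1 : 2 * u + 5 - 1 = 2 * u + 4 := by omega
    rw [hb, hc, hF]
    simp only [map_add, map_sub, pderiv_mul, pderiv_pow, pderiv_X_self,
      pderiv_X_of_ne (by decide : (0 : Fin 3) ≠ 1), pderiv_X_of_ne (by decide : (2 : Fin 3) ≠ 1),
      pderiv_X_of_ne (by decide : (0 : Fin 3) ≠ 2), pderiv_X_of_ne (by decide : (1 : Fin 3) ≠ 2),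
      Nat.add_sub_cancel, e1]
    simp only [map_mul, map_add, map_sub, map_one, map_natCast, map_ofNat]
    push_cast
    ring
  refine ⟨key, ?_⟩
  apply Nat.sInf_le
  refine ⟨![0, b, c], ?_, ?_, ?_⟩
  · rw [AR, LinearMap.mem_ker, jacMap, Fintype.linearCombination_apply]
    rw [Fin.sum_univ_three]
    simp only [Matrix.cons_val_zero, Matrix.cons_val_one, Matrix.head_cons, smul_eq_mul,
      Matrix.cons_val_two, Matrix.tail_cons]
    linear_combination key
  · intro h
    have h1 : b = 0 := by
      have := congrFun h 1
      simpa using this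
    have : (X 0 : S) ^ (u + 2) * X 1 ≠ 0 :=
      mul_ne_zero (pow_ne_zero _ (X_ne_zero _)) (X_ne_zero _)
    exact this (hb ▸ h1)
  · intro i
    fin_cases i
    · exact isHomogeneous_zero _ _ _
    · have h := ((isHomogeneous_X ℂ (0 : Fin 3)).pow (u + 2)).mul (isHomogeneous_X ℂ 1)
      exact (show 1 * (u + 2) + 1 = u + 3 from by omega) ▸ h
    · have h1 := ((isHomogeneous_C (Fin 3) ((↑(u + 3) : ℂ) + 2)).mul
        ((isHomogeneous_X ℂ (0 : Fin 3)).pow u)).mul ((isHomogeneous_X ℂ (1 : Fin 3)).pow 3)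
      have h2 := (isHomogeneous_C (Fin 3) (2 * (↑(u + 3) : ℂ) - 1)).mul
        ((isHomogeneous_X ℂ (1 : Fin 3)).pow (u + 3))
      have h3 := ((isHomogeneous_C (Fin 3) ((↑(u + 3) : ℂ) - 1)).mul
        ((isHomogeneous_X ℂ (0 : Fin 3)).pow (u + 2))).mul (isHomogeneous_X ℂ (2 : Fin 3))
      exact (((show 0 + 1 * u + 1 * 3 = u + 3 from by omega) ▸ h1).add
        ((show 0 + 1 * (u + 3) = u + 3 from by omega) ▸ h2)).sub
        ((show 0 + 1 * (u + 2) + 1 = u + 3 from by omega) ▸ h3)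

end
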